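/- Let R be a commutative ring, and let A be a split exact complex 0 → A₃ → A₃ ⊕ M → R ⊕ M → R as above, equipped with the standard DGA multiplication. Given any R-linear map b : ⋀² A₁ → A₃, define a new multiplication by adding d₃(b(e₁ ∧ e₂)) to each product e₁·e₂ of degree-1 elements, and adding b(d₂(f) ∧ e) to each product e·f with e ∈ A₁, f ∈ A₂. Then the new multiplication again makes A a differential graded commutative algebra (graded-commutative, satisfying the Leibniz rule). -/
import Mathlib


/-!
STATEMENT 5.  `A` is the split exact complex
`0 → A₃ → A₃ ⊕ M → R ⊕ M → R` (with `M = R^{p+1}`, `d₃ a = (a,0)`, `d₂ (a,m) = (0,m)`,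
`d₁ (r,m) = r`) equipped with the standard DGA multiplication
(`r_{(1)}·m_{(1)} = m_{(2)}`, `m_{(1)}·m'_{(1)} = 0`, `r_{(1)}·a_{(2)} = a_{(3)}`, all
other listed products zero; by bilinearity and graded commutativity this is
`(r,m)·(r',m') = (0, r•m' - r'•m)` and `(r,m)·(a,m'') = r•a`).
Given any `R`-linear map `b : ⋀² A₁ → A₃` — encoded as an alternating bilinear map
`b : A₁ → A₁ → A₃` — the modified multiplication adds `d₃(b(e₁ ∧ e₂))` to the product
`e₁·e₂` of degree-1 elements and `b(d₂(f) ∧ e)` to the product `e·f` for `e ∈ A₁`,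
`f ∈ A₂`.  The claim: the new multiplication again makes `A` a DGA (graded-commutative,
satisfying the Leibniz rule).
-/
theorem stmt5 {R : Type*} [CommRing R] (p : ℕ)
    (A₃ : Type*) [AddCommGroup A₃] [Module R A₃] [Module.Free R A₃] [Module.Finite R A₃]
    (d₃ : A₃ →ₗ[R] A₃ × (Fin (p+1) → R))
    (d₂ : A₃ × (Fin (p+1) → R) →ₗ[R] R × (Fin (p+1) → R))
    (d₁ : R × (Fin (p+1) → R) →ₗ[R] R)
    (hd₃ : ∀ a, d₃ a = (a, 0))
    (hd₂ : ∀ x : A₃ × (Fin (p+1) → R), d₂ x = (0, x.2))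
    (hd₁ : ∀ x : R × (Fin (p+1) → R), d₁ x = x.1)
    -- the map b : ⋀² A₁ → A₃, as an alternating bilinear map
    (b : (R × (Fin (p+1) → R)) →ₗ[R] (R × (Fin (p+1) → R)) →ₗ[R] A₃)
    (hb : ∀ x, b x x = 0)
    -- the new multiplication: standard multiplication modified by b
    (mul11 : (R × (Fin (p+1) → R)) → (R × (Fin (p+1) → R)) → A₃ × (Fin (p+1) → R))
    (mul12 : (R × (Fin (p+1) → R)) → (A₃ × (Fin (p+1) → R)) → A₃)
    (hmul11 : ∀ x y, mul11 x y = (0, x.1 • y.2 - y.1 • x.2) + d₃ (b x y))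
    (hmul12 : ∀ x f, mul12 x f = x.1 • f.1 + b (d₂ f) x) :
    -- graded commutativity in odd degree
    (∀ x y, mul11 x y = - mul11 y x) ∧ (∀ x, mul11 x x = 0) ∧
    -- Leibniz rule for degree 1 · degree 1
    (∀ x y, d₂ (mul11 x y) = d₁ x • y - d₁ y • x) ∧
    -- Leibniz rule for degree 1 · degree 2
    (∀ x f, d₃ (mul12 x f) = d₁ x • f - mul11 x (d₂ f)) := by
  have hskew : ∀ x y, b x y = - b y x := by
    intro x y
    have h := hb (x + y)
    simp only [map_add, LinearMap.add_apply, hb] at h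
    abel_nf at h ⊢
    linear_combination (norm := abel) h
  refine ⟨?_, ?_, ?_, ?_⟩
  · intro x y
    rw [hmul11, hmul11, hd₃, hd₃, hskew x y, Prod.ext_iff]
    constructor <;> simp <;> abel
  · intro x
    rw [hmul11, hd₃, hb]
    simp
  · intro x y
    rw [hmul11, hd₂, hd₃, hd₁, hd₁, Prod.ext_iff]
    constructor <;> simp <;> ring
  · intro x f
    rw [hmul12, hmul11, hd₃, hd₃, hd₂, hd₁, hskew (0, f.2) x, Prod.ext_iff]
    constructor <;> simp <;> abel
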